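/- Let n, σ, m ∈ ℕ and n̂ ∈ ℕ with n̂ ≥ n + σ, let A₀, A₁, ..., A_m be real symmetric n×n matrices, let b ∈ ℝ^m, and let r ∈ ℕ. Define F := {X : X real symmetric positive semidefinite n×n matrix with ⟨A_i, X⟩ = b_i for all i ∈ {1,...,m}}, and call X ∈ F optimal if ⟨A₀, X⟩ ≤ ⟨A₀, X'⟩ for all X' ∈ F. Define F̂ := {X : X real symmetric positive semidefinite n̂×n̂ matrix with ⟨A_i, X_{1:n,1:n}⟩ = b_i for all i ∈ {1,...,m}, X_{n+1:n+σ,1:n} = 0_{σ×n}, and X_{n+1:n+σ,n+1:n+σ} = I_σ}, and call X ∈ F̂ optimal if ⟨A₀, X_{1:n,1:n}⟩ ≤ ⟨A₀, X'_{1:n,1:n}⟩ for all X' ∈ F̂. If every optimal element of F has rank at least r, then every optimal element of F̂ has rank at least r + σ. -/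

import Mathlib

open Matrix

noncomputable section

/-- block-diagonal of two PSD matrices is PSD -/
lemma psd_fromBlocks {α β : Type*} [Fintype α] [Fintype β] [DecidableEq α] [DecidableEq β]
    {A : Matrix α α ℝ} {D : Matrix β β ℝ} (hA : A.PosSemidef) (hD : D.PosSemidef) :
    (Matrix.fromBlocks A 0 0 D).PosSemidef := by
  open scoped MatrixOrder in
  obtain ⟨SA, rfl⟩ := CStarAlgebra.nonneg_iff_eq_star_mul_self.mp hA.nonneg
  open scoped MatrixOrder in
  obtain ⟨SD, rfl⟩ := CStarAlgebra.nonneg_iff_eq_star_mul_self.mp hD.nonneg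
  have h := Matrix.posSemidef_conjTranspose_mul_self (Matrix.fromBlocks SA 0 0 SD)
  rw [Matrix.fromBlocks_conjTranspose, Matrix.fromBlocks_multiply] at h
  simp only [conjTranspose_zero, Matrix.mul_zero, Matrix.zero_mul, add_zero, zero_add] at h
  simpa only [star_eq_conjTranspose] using h

/-- extension-by-zero into left component -/
def elimL (α β : Type*) [Fintype α] [Fintype β] : (α → ℝ) →ₗ[ℝ] (α ⊕ β → ℝ) where
  toFun v := Sum.elim v 0
  map_add' x y := by ext (i|i) <;> simp
  map_smul' c x := by ext (i|i) <;> simp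

def elimR (α β : Type*) [Fintype α] [Fintype β] : (β → ℝ) →ₗ[ℝ] (α ⊕ β → ℝ) where
  toFun v := Sum.elim 0 v
  map_add' x y := by ext (i|i) <;> simp
  map_smul' c x := by ext (i|i) <;> simp

lemma rank_fromBlocks_ge {α β : Type*} [Fintype α] [Fintype β] [DecidableEq α] [DecidableEq β]
    (A : Matrix α α ℝ) (D : Matrix β β ℝ) :
    A.rank + D.rank ≤ (Matrix.fromBlocks A 0 0 D).rank := by
  classical
  set M := Matrix.fromBlocks A 0 0 D with hM
  have hinjL : Function.Injective (elimL α β) := fun x y h => by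
    funext i; exact congrFun h (Sum.inl i)
  have hinjR : Function.Injective (elimR α β) := fun x y h => by
    funext i; exact congrFun h (Sum.inr i)
  set U := (LinearMap.range A.mulVecLin).map (elimL α β) with hU
  set W := (LinearMap.range D.mulVecLin).map (elimR α β) with hW
  have hUle : U ≤ LinearMap.range M.mulVecLin := by
    rintro _ ⟨_, ⟨x, rfl⟩, rfl⟩
    refine ⟨Sum.elim x 0, ?_⟩
    simp only [Matrix.mulVecLin_apply, hM, Matrix.fromBlocks_mulVec]
    ext (i|i) <;> simp [elimL]
  have hWle : W ≤ LinearMap.range M.mulVecLin := by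
    rintro _ ⟨_, ⟨x, rfl⟩, rfl⟩
    refine ⟨Sum.elim 0 x, ?_⟩
    simp only [Matrix.mulVecLin_apply, hM, Matrix.fromBlocks_mulVec]
    ext (i|i) <;> simp [elimR]
  have hinf : U ⊓ W = ⊥ := by
    rw [eq_bot_iff]
    rintro v ⟨hvU, hvW⟩
    obtain ⟨u, -, rfl⟩ := hvU
    obtain ⟨w, -, hw⟩ := hvW
    have hz : ∀ i, (elimL α β) u i = 0 := by
      rintro (i|i)
      · exact (congrFun hw (Sum.inl i)).symm
      · simp [elimL]
    simp only [Submodule.mem_bot]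
    funext i; exact hz i
  have hfU : Module.finrank ℝ U = A.rank := by
    rw [Matrix.rank]
    exact (((LinearMap.range A.mulVecLin).equivMapOfInjective _ hinjL).finrank_eq).symm
  have hfW : Module.finrank ℝ W = D.rank := by
    rw [Matrix.rank]
    exact (((LinearMap.range D.mulVecLin).equivMapOfInjective _ hinjR).finrank_eq).symm
  have hsum := Submodule.finrank_sup_add_finrank_inf_eq U W
  rw [hinf, finrank_bot, add_zero, hfU, hfW] at hsum
  calc A.rank + D.rank = Module.finrank ℝ (U ⊔ W : Submodule ℝ _) := hsum.symm
    _ ≤ Module.finrank ℝ (LinearMap.range M.mulVecLin) :=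
        Submodule.finrank_mono (sup_le hUle hWle)
    _ = M.rank := rfl

/-- Extending an SDP by a `σ×σ` identity block increases the minimal rank of optimal
solutions by `σ`: if every optimal solution of the original SDP has rank at least `r`, then
every optimal solution of the extended SDP has rank at least `r + σ`. -/
theorem extended_SDP_rank (n σ m nh : ℕ) (hnh : n + σ ≤ nh)
    (A0 : Matrix (Fin n) (Fin n) ℝ) (hA0 : A0.IsSymm)
    (A : Fin m → Matrix (Fin n) (Fin n) ℝ) (hA : ∀ i, (A i).IsSymm)
    (b : Fin m → ℝ) (r : ℕ)
    (horig : ∀ X : Matrix (Fin n) (Fin n) ℝ,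
      X.PosSemidef → (∀ i, ((A i)ᵀ * X).trace = b i) →
      (∀ X' : Matrix (Fin n) (Fin n) ℝ, X'.PosSemidef →
        (∀ i, ((A i)ᵀ * X').trace = b i) → (A0ᵀ * X).trace ≤ (A0ᵀ * X').trace) →
      r ≤ X.rank) :
    ∀ X : Matrix (Fin nh) (Fin nh) ℝ,
      X.PosSemidef →
      (∀ i, ((A i)ᵀ *
        Matrix.of (fun p q : Fin n => X ⟨(p : ℕ), by omega⟩ ⟨(q : ℕ), by omega⟩)).trace = b i) →
      (∀ (p : Fin σ) (q : Fin n), X ⟨n + (p : ℕ), by omega⟩ ⟨(q : ℕ), by omega⟩ = 0) →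
      (∀ p q : Fin σ,
        X ⟨n + (p : ℕ), by omega⟩ ⟨n + (q : ℕ), by omega⟩ = if p = q then (1:ℝ) else 0) →
      (∀ X' : Matrix (Fin nh) (Fin nh) ℝ, X'.PosSemidef →
        (∀ i, ((A i)ᵀ *
          Matrix.of (fun p q : Fin n =>
            X' ⟨(p : ℕ), by omega⟩ ⟨(q : ℕ), by omega⟩)).trace = b i) →
        (∀ (p : Fin σ) (q : Fin n), X' ⟨n + (p : ℕ), by omega⟩ ⟨(q : ℕ), by omega⟩ = 0) →
        (∀ p q : Fin σ,
          X' ⟨n + (p : ℕ), by omega⟩ ⟨n + (q : ℕ), by omega⟩ = if p = q then (1:ℝ) else 0) →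
        (A0ᵀ *
          Matrix.of (fun p q : Fin n => X ⟨(p : ℕ), by omega⟩ ⟨(q : ℕ), by omega⟩)).trace
          ≤ (A0ᵀ *
            Matrix.of (fun p q : Fin n =>
              X' ⟨(p : ℕ), by omega⟩ ⟨(q : ℕ), by omega⟩)).trace) →
      r + σ ≤ X.rank := by
  intro X hX hfeas hzero hid hopt
  classical
  set k := nh - (n + σ) with hkdef
  have hk : n + σ + k = nh := by omega
  set e2 : (Fin n ⊕ Fin σ) ⊕ Fin k ≃ Fin nh :=
    ((finSumFinEquiv.sumCongr (Equiv.refl (Fin k))).trans (finSumFinEquiv.trans (finCongr hk)))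
    with he2def
  have he2l : ∀ p : Fin n, ((e2 (Sum.inl (Sum.inl p))) : ℕ) = (p : ℕ) := by
    intro p; simp [he2def, finSumFinEquiv]
  have he2m : ∀ p : Fin σ, ((e2 (Sum.inl (Sum.inr p))) : ℕ) = n + (p : ℕ) := by
    intro p; simp [he2def, finSumFinEquiv]
  set emb : Fin n → Fin nh := fun p => ⟨(p : ℕ), by omega⟩ with hembdef
  set Y : Matrix (Fin n) (Fin n) ℝ := X.submatrix emb emb with hYdef
  have hYpsd : Y.PosSemidef := hX.submatrix emb
  -- optimality of Y for the original problem
  have hYopt : ∀ X' : Matrix (Fin n) (Fin n) ℝ, X'.PosSemidef →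
      (∀ i, ((A i)ᵀ * X').trace = b i) → (A0ᵀ * Y).trace ≤ (A0ᵀ * X').trace := by
    intro X' hX' hfeas'
    set N : Matrix ((Fin n ⊕ Fin σ) ⊕ Fin k) ((Fin n ⊕ Fin σ) ⊕ Fin k) ℝ :=
      Matrix.fromBlocks (Matrix.fromBlocks X' 0 0 (1 : Matrix (Fin σ) (Fin σ) ℝ)) 0 0
        (0 : Matrix (Fin k) (Fin k) ℝ) with hNdef
    set X'' : Matrix (Fin nh) (Fin nh) ℝ := N.submatrix e2.symm e2.symm with hX''def
    have hNpsd : N.PosSemidef :=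
      psd_fromBlocks (psd_fromBlocks hX' Matrix.PosSemidef.one) Matrix.PosSemidef.zero
    have hX''psd : X''.PosSemidef := hNpsd.submatrix _
    have hent : ∀ (a c : Fin nh) (s t : (Fin n ⊕ Fin σ) ⊕ Fin k),
        (a : ℕ) = ((e2 s : Fin nh) : ℕ) → (c : ℕ) = ((e2 t : Fin nh) : ℕ) → X'' a c = N s t := by
      intro a c s t ha hc
      have ha' : a = e2 s := Fin.ext ha
      have hc' : c = e2 t := Fin.ext hc
      rw [ha', hc', hX''def]
      simp
    have hblk : (Matrix.of fun p q : Fin n =>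
        X'' ⟨(p : ℕ), by omega⟩ ⟨(q : ℕ), by omega⟩) = X' := by
      ext p q
      simp only [Matrix.of_apply]
      refine (hent _ _ (Sum.inl (Sum.inl p)) (Sum.inl (Sum.inl q))
        (he2l p).symm (he2l q).symm).trans ?_
      simp [hNdef]
    refine le_trans (hopt X'' hX''psd ?_ ?_ ?_) (le_of_eq ?_)
    · intro i
      rw [hblk]
      exact hfeas' i
    · intro p q
      refine (hent _ _ (Sum.inl (Sum.inr p)) (Sum.inl (Sum.inl q))
        (he2m p).symm (he2l q).symm).trans ?_
      simp [hNdef]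
    · intro p q
      refine (hent _ _ (Sum.inl (Sum.inr p)) (Sum.inl (Sum.inr q))
        (he2m p).symm (he2m q).symm).trans ?_
      simp [hNdef, Matrix.one_apply]
    · rw [hblk]
  have hYfeas : ∀ i, ((A i)ᵀ * Y).trace = b i := fun i => hfeas i
  have hYrank : r ≤ Y.rank := horig Y hYpsd hYfeas hYopt
  -- the principal (n+σ)-block of X
  set f : Fin n ⊕ Fin σ → Fin nh :=
    Sum.elim (fun p => ⟨(p : ℕ), by omega⟩) (fun p => ⟨n + (p : ℕ), by omega⟩) with hfdef
  set B : Matrix (Fin n ⊕ Fin σ) (Fin n ⊕ Fin σ) ℝ := X.submatrix f f with hBdef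
  have hB : B = Matrix.fromBlocks Y 0 0 (1 : Matrix (Fin σ) (Fin σ) ℝ) := by
    ext s t
    match s, t with
    | Sum.inl p, Sum.inl q => rfl
    | Sum.inl p, Sum.inr q =>
      show X _ _ = (0 : Matrix (Fin n) (Fin σ) ℝ) p q
      have hsym := hX.isHermitian.apply (f (Sum.inl p)) (f (Sum.inr q))
      rw [star_trivial] at hsym
      rw [← hsym]
      exact hzero q p
    | Sum.inr p, Sum.inl q =>
      show X _ _ = (0 : Matrix (Fin σ) (Fin n) ℝ) p q
      exact hzero p q
    | Sum.inr p, Sum.inr q =>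
      show X _ _ = (1 : Matrix (Fin σ) (Fin σ) ℝ) p q
      rw [Matrix.one_apply]
      exact hid p q
  -- rank B ≤ rank X
  set P : Matrix (Fin n ⊕ Fin σ) (Fin nh) ℝ :=
    Matrix.of fun s i => if i = f s then (1:ℝ) else 0 with hPdef
  have hPX : P * X = X.submatrix f id := by
    ext s j
    simp [hPdef, Matrix.mul_apply, ite_mul]
  have hXP : X.submatrix f id * Pᵀ = B := by
    ext s t
    simp [hPdef, hBdef, Matrix.mul_apply, mul_ite]
  have hBrank : B.rank ≤ X.rank := by
    rw [← hXP, ← hPX]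
    exact le_trans (Matrix.rank_mul_le_left _ _) (Matrix.rank_mul_le_right _ _)
  have hfrom : Y.rank + σ ≤ B.rank := by
    rw [hB]
    have h := rank_fromBlocks_ge Y (1 : Matrix (Fin σ) (Fin σ) ℝ)
    rwa [Matrix.rank_one, Fintype.card_fin] at h
  have : r + σ ≤ Y.rank + σ := by omega
  omega
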